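/- arXiv:2411.11785 — 5 statements merged into one kernel-verified Lean document; each statement's English description precedes it below -/
import Mathlib

section
/- Let G be an r-uniform multi-hypergraph on N vertices with maximum degree at most μ times the average degree, where μ ≥ 1. Let t be a positive integer with t ≤ N/(2r²μ) + 1. Then G contains at least (e(G)/(2t))^t matchings of size t (a matching being a set of pairwise disjoint hyperedges). -/
/-- An r-uniform multi-hypergraph (edge index type `E`, edge map `f`)
on `N = card V` vertices with max degree at most `μ` times the average degree
`r * e(G) / N`, and `t ≤ N/(2r²μ) + 1`, contains at least `(e(G)/(2t))^t`
matchings of size `t`. -/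
theorem stmt_0 {V E : Type*} [Fintype V] [Fintype E] [DecidableEq V] [DecidableEq E]
    [Nonempty V]
    (r t : ℕ) (hr : 1 ≤ r) (ht : 1 ≤ t) (μ : ℝ) (hμ : 1 ≤ μ)
    (f : E → Finset V) (hunif : ∀ e, (f e).card = r)
    (hmax : ∀ v : V, ((Finset.univ.filter (fun e : E => v ∈ f e)).card : ℝ) ≤
      μ * ((r * Fintype.card E : ℝ) / (Fintype.card V : ℝ)))
    (ht2 : (t : ℝ) ≤ (Fintype.card V : ℝ) / (2 * r ^ 2 * μ) + 1) :
    ((Fintype.card E : ℝ) / (2 * t)) ^ t ≤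
      ((Finset.univ.filter (fun S : Finset E => S.card = t ∧
        ∀ e₁ ∈ S, ∀ e₂ ∈ S, e₁ ≠ e₂ → Disjoint (f e₁) (f e₂))).card : ℝ) := by
  classical
  have hr0 : (0:ℝ) < r := by exact_mod_cast hr
  have ht0 : (0:ℝ) < t := by exact_mod_cast ht
  have hN0 : (0:ℝ) < (Fintype.card V : ℝ) := by exact_mod_cast Fintype.card_pos
  set m : ℕ := Fintype.card E with hm
  set N : ℕ := Fintype.card V with hNdef
  let Seq : (i : ℕ) → Finset (Fin i → E) := fun i =>
    Finset.univ.filter (fun g => ∀ a b : Fin i, a ≠ b → Disjoint (f (g a)) (f (g b)))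
  -- key per-step bound
  have hhalf : ∀ i : ℕ, (i:ℝ) ≤ (t:ℝ) - 1 → ∀ g : Fin i → E,
      ((m:ℝ)/2) ≤ ((Finset.univ.filter
        (fun e : E => ∀ a : Fin i, Disjoint (f (g a)) (f e))).card : ℝ) := by
    intro i hi g
    set U : Finset V := Finset.univ.biUnion (fun a : Fin i => f (g a)) with hU
    have hUcard : U.card ≤ i * r := by
      calc U.card ≤ ∑ a : Fin i, (f (g a)).card := Finset.card_biUnion_le
        _ = i * r := by simp [hunif, Finset.sum_const, mul_comm]
    set bad : Finset E := Finset.univ.filter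
      (fun e : E => ¬ ∀ a : Fin i, Disjoint (f (g a)) (f e)) with hbad
    have hbadsub : bad ⊆ U.biUnion (fun v => Finset.univ.filter (fun e : E => v ∈ f e)) := by
      intro e he
      simp only [hbad, Finset.mem_filter, Finset.mem_univ, true_and] at he
      push_neg at he
      obtain ⟨a, ha⟩ := he
      rw [Finset.not_disjoint_iff] at ha
      obtain ⟨v, hv1, hv2⟩ := ha
      refine Finset.mem_biUnion.2 ⟨v, ?_, ?_⟩
      · exact Finset.mem_biUnion.2 ⟨a, Finset.mem_univ _, hv1⟩
      · simp [hv2]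
    have key : (i:ℝ) * (2 * r^2 * μ) ≤ N := by
      have h2r : (0:ℝ) < 2 * r^2 * μ := by positivity
      have h5 : ((t:ℝ) - 1) * (2 * r^2 * μ) ≤ N := by
        rw [← le_div_iff₀ h2r]; linarith
      nlinarith
    have hm0 : (0:ℝ) ≤ m := by positivity
    have hbadcard : (bad.card : ℝ) ≤ (m:ℝ)/2 := by
      have h1 : bad.card ≤ ∑ v ∈ U, (Finset.univ.filter (fun e : E => v ∈ f e)).card :=
        le_trans (Finset.card_le_card hbadsub) Finset.card_biUnion_le
      have h2 : (bad.card : ℝ) ≤ ∑ v ∈ U, ((Finset.univ.filter (fun e : E => v ∈ f e)).card : ℝ) := by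
        exact_mod_cast h1
      have h3 : (∑ v ∈ U, ((Finset.univ.filter (fun e : E => v ∈ f e)).card : ℝ))
          ≤ (U.card : ℝ) * (μ * ((r * m : ℝ)/(N:ℝ))) := by
        calc (∑ v ∈ U, ((Finset.univ.filter (fun e : E => v ∈ f e)).card : ℝ))
            ≤ ∑ _v ∈ U, μ * ((r * m : ℝ)/(N:ℝ)) := Finset.sum_le_sum (fun v _ => hmax v)
          _ = (U.card : ℝ) * (μ * ((r * m : ℝ)/(N:ℝ))) := by
              rw [Finset.sum_const, nsmul_eq_mul]
      have h4 : (U.card : ℝ) ≤ (i:ℝ) * r := by exact_mod_cast hUcard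
      have hA : (i:ℝ) * r * (μ * ((r * m : ℝ)/(N:ℝ))) ≤ (m:ℝ)/2 := by
        have e1 : (i:ℝ) * r * (μ * ((r * m : ℝ)/(N:ℝ))) = ((i:ℝ) * r^2 * μ * m)/(N:ℝ) := by
          field_simp
        rw [e1, div_le_iff₀ hN0]
        nlinarith [mul_le_mul_of_nonneg_left key hm0]
      have hμpos : (0:ℝ) ≤ μ * ((r * m : ℝ)/(N:ℝ)) := by positivity
      calc (bad.card : ℝ) ≤ (U.card : ℝ) * (μ * ((r * m : ℝ)/(N:ℝ))) := le_trans h2 h3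
        _ ≤ (i:ℝ) * r * (μ * ((r * m : ℝ)/(N:ℝ))) := mul_le_mul_of_nonneg_right h4 hμpos
        _ ≤ (m:ℝ)/2 := hA
    have hsplit : (Finset.univ.filter
        (fun e : E => ∀ a : Fin i, Disjoint (f (g a)) (f e))).card + bad.card = m :=
      Finset.card_filter_add_card_filter_not _
    have hc : ((Finset.univ.filter
        (fun e : E => ∀ a : Fin i, Disjoint (f (g a)) (f e))).card : ℝ) + (bad.card : ℝ) = m := by
      exact_mod_cast hsplit
    linarith
  -- induction: count of pairwise-disjoint tuples
  have main : ∀ i, i ≤ t → ((m:ℝ)/2)^i ≤ ((Seq i).card : ℝ) := by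
    intro i
    induction i with
    | zero =>
      intro _
      have h0 : Seq 0 = Finset.univ := by
        ext g
        simp only [Seq, Finset.mem_filter, Finset.mem_univ, true_and, iff_true]
        exact fun a => a.elim0
      rw [h0]
      simp
    | succ i ih =>
      intro hit
      have hi' : i ≤ t := Nat.le_of_succ_le hit
      have hi1 : (i:ℝ) ≤ (t:ℝ) - 1 := by
        have : ((i:ℕ):ℝ) + 1 ≤ t := by exact_mod_cast hit
        linarith
      set ext : (Fin i → E) → Finset E := fun g =>
        Finset.univ.filter (fun e => ∀ a, Disjoint (f (g a)) (f e)) with hext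
      set sig := (Seq i).sigma (fun g => ext g) with hsig
      have hmaps : ∀ p ∈ sig, (Fin.snoc p.1 p.2 : Fin (i+1) → E) ∈ Seq (i+1) := by
        rintro ⟨g, e⟩ hp
        rw [hsig, Finset.mem_sigma] at hp
        obtain ⟨hg, he⟩ := hp
        simp only [Seq, Finset.mem_filter, Finset.mem_univ, true_and] at hg ⊢
        simp only [hext, Finset.mem_filter, Finset.mem_univ, true_and] at he
        intro a b hab
        induction a using Fin.lastCases with
        | last =>
          induction b using Fin.lastCases with
          | last => exact absurd rfl hab
          | cast b' =>
            simp only [Fin.snoc_last, Fin.snoc_castSucc]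
            exact (he b').symm
        | cast a' =>
          induction b using Fin.lastCases with
          | last =>
            simp only [Fin.snoc_last, Fin.snoc_castSucc]
            exact he a'
          | cast b' =>
            simp only [Fin.snoc_castSucc]
            exact hg a' b' (fun h => hab (by rw [h]))
      have hinj : Set.InjOn (fun p : (_ : Fin i → E) × E =>
          (Fin.snoc p.1 p.2 : Fin (i+1) → E)) sig := by
        rintro ⟨g1, e1⟩ _ ⟨g2, e2⟩ _ h
        simp only at h
        have h1 : g1 = g2 := by
          funext a
          have := congrFun h (Fin.castSucc a)
          simpa [Fin.snoc_castSucc] using this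
        have h2 : e1 = e2 := by
          have := congrFun h (Fin.last i)
          simpa [Fin.snoc_last] using this
        subst h1; subst h2; rfl
      have hcard1 : sig.card ≤ (Seq (i+1)).card := by
        calc sig.card = (sig.image (fun p : (_ : Fin i → E) × E =>
            (Fin.snoc p.1 p.2 : Fin (i+1) → E))).card :=
              (Finset.card_image_of_injOn hinj).symm
          _ ≤ (Seq (i+1)).card := Finset.card_le_card
              (Finset.image_subset_iff.2 hmaps)
      have hcard2 : (((Seq i).card : ℝ)) * ((m:ℝ)/2) ≤ (sig.card : ℝ) := by
        rw [hsig, Finset.card_sigma]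
        push_cast
        calc ((Seq i).card : ℝ) * ((m:ℝ)/2) = ∑ _g ∈ Seq i, ((m:ℝ)/2) := by
              rw [Finset.sum_const, nsmul_eq_mul]
          _ ≤ ∑ g ∈ Seq i, ((ext g).card : ℝ) :=
              Finset.sum_le_sum (fun g _ => hhalf i hi1 g)
      have hm2 : (0:ℝ) ≤ (m:ℝ)/2 := by positivity
      calc ((m:ℝ)/2)^(i+1) = ((m:ℝ)/2)^i * ((m:ℝ)/2) := by ring
        _ ≤ ((Seq i).card : ℝ) * ((m:ℝ)/2) := mul_le_mul_of_nonneg_right (ih hi') hm2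
        _ ≤ (sig.card : ℝ) := hcard2
        _ ≤ ((Seq (i+1)).card : ℝ) := by exact_mod_cast hcard1
  -- relate tuples to matchings
  set Mset : Finset (Finset E) := Finset.univ.filter (fun S : Finset E => S.card = t ∧
      ∀ e₁ ∈ S, ∀ e₂ ∈ S, e₁ ≠ e₂ → Disjoint (f e₁) (f e₂)) with hMset
  have hsub : Seq t ⊆ Mset.biUnion (fun S => Fintype.piFinset (fun _ : Fin t => S)) := by
    intro g hg
    simp only [Seq, Finset.mem_filter, Finset.mem_univ, true_and] at hg
    have ginj : Function.Injective g := by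
      intro a b hab
      by_contra hne
      have := hg a b hne
      rw [hab, disjoint_self] at this
      have h2 := hunif (g b)
      rw [this] at h2
      simp only [Finset.bot_eq_empty, Finset.card_empty] at h2
      omega
    have hS : Finset.univ.image g ∈ Mset := by
      simp only [hMset, Finset.mem_filter, Finset.mem_univ, true_and]
      constructor
      · rw [Finset.card_image_of_injective _ ginj, Finset.card_univ, Fintype.card_fin]
      · intro e₁ he₁ e₂ he₂ hne
        obtain ⟨a, _, rfl⟩ := Finset.mem_image.1 he₁
        obtain ⟨b, _, rfl⟩ := Finset.mem_image.1 he₂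
        exact hg a b (fun h => hne (by rw [h]))
    refine Finset.mem_biUnion.2 ⟨Finset.univ.image g, hS, ?_⟩
    exact Fintype.mem_piFinset.2 (fun a => Finset.mem_image_of_mem g (Finset.mem_univ a))
  have hcount : (Seq t).card ≤ Mset.card * t^t := by
    calc (Seq t).card ≤ (Mset.biUnion (fun S => Fintype.piFinset (fun _ : Fin t => S))).card :=
          Finset.card_le_card hsub
      _ ≤ ∑ S ∈ Mset, (Fintype.piFinset (fun _ : Fin t => S)).card := Finset.card_biUnion_le
      _ = ∑ S ∈ Mset, t^t := by
          refine Finset.sum_congr rfl (fun S hS => ?_)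
          rw [Fintype.card_piFinset_const]
          simp only [hMset, Finset.mem_filter] at hS
          rw [hS.2.1]
      _ = Mset.card * t^t := by rw [Finset.sum_const, smul_eq_mul]
  -- conclude
  have hmain := main t le_rfl
  have hcountR : ((Seq t).card : ℝ) ≤ (Mset.card : ℝ) * (t:ℝ)^t := by exact_mod_cast hcount
  have htt : (0:ℝ) < (t:ℝ)^t := by positivity
  have hrw : ((m:ℝ)/(2*t)) = ((m:ℝ)/2)/(t:ℝ) := by rw [div_div]
  rw [hrw, div_pow, div_le_iff₀ htt]
  calc ((m:ℝ)/2)^t ≤ ((Seq t).card : ℝ) := hmain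
    _ ≤ (Mset.card : ℝ) * (t:ℝ)^t := hcountR
end

section
/- Let G be a graph with at most n vertices, all of whose degrees lie in the interval [d/5, d], where d ≥ 1. Then G contains a nonempty subgraph H whose minimum degree is at least Δ(H)/4 and whose minimum degree is at least d/(500·log(8n/d)). (Weaker quantitative version of the 4-almost-regular extraction.) -/
open Finset
set_option linter.unusedSectionVars false
set_option maxHeartbeats 1000000

namespace AR
variable {V : Type*} [Fintype V] [DecidableEq V]

/-- degree of a vertex in an edge set -/
def deg (E : Finset (Sym2 V)) (v : V) : ℕ := (E.filter (fun e => v ∈ e)).card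

lemma deg_mono {E E' : Finset (Sym2 V)} (h : E ⊆ E') (v : V) : deg E v ≤ deg E' v :=
  Finset.card_le_card (Finset.filter_subset_filter _ h)

lemma sum_deg_le (T : Finset V) (E : Finset (Sym2 V)) (c : ℕ)
    (h : ∀ e ∈ E, (T.filter (· ∈ e)).card ≤ c) : ∑ v ∈ T, deg E v ≤ c * E.card := by
  have : ∑ v ∈ T, deg E v = ∑ e ∈ E, (T.filter (· ∈ e)).card := by
    simp only [deg, Finset.card_filter]
    rw [Finset.sum_comm]
  rw [this]
  calc ∑ e ∈ E, (T.filter (· ∈ e)).card ≤ ∑ _e ∈ E, c := Finset.sum_le_sum h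
    _ = c * E.card := by rw [Finset.sum_const, smul_eq_mul, mul_comm]

lemma le_sum_deg (T : Finset V) (E : Finset (Sym2 V)) (c : ℕ)
    (h : ∀ v ∈ T, c ≤ deg E v) : T.card * c ≤ ∑ v ∈ T, deg E v := by
  simpa [smul_eq_mul] using Finset.card_nsmul_le_sum T (deg E) c h

lemma card_nbrs_le_deg (G : SimpleGraph V) [DecidableRel G.Adj]
    (E : Finset (Sym2 V)) (a : V) (T : Finset V)
    (h : ∀ w ∈ T, G.Adj a w → s(a,w) ∈ E) :
    (T.filter (fun w => G.Adj a w)).card ≤ deg E a := by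
  rw [deg]
  apply Finset.card_le_card_of_injOn (fun w => s(a,w))
  · intro w hw
    rw [Finset.mem_coe, Finset.mem_filter] at hw ⊢
    exact ⟨h w hw.1 hw.2, by simp⟩
  · intro w₁ _ w₂ _ heq
    exact Sym2.congr_right.mp heq

lemma deg_eq_card_nbrs (E : Finset (Sym2 V)) (v : V) :
    (Finset.univ.filter (fun w => s(v,w) ∈ E)).card = deg E v := by
  rw [deg]
  apply Finset.card_bij (fun w _ => s(v, w))
  · intro w hw
    rw [Finset.mem_filter] at hw ⊢
    exact ⟨hw.2, by simp⟩
  · intro w₁ h₁ w₂ h₂ heq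
    exact Sym2.congr_right.mp heq
  · intro e he
    rw [Finset.mem_filter] at he
    refine ⟨Sym2.Mem.other he.2, ?_, Sym2.other_spec he.2⟩
    rw [Finset.mem_filter]
    rw [Sym2.other_spec he.2]
    exact ⟨Finset.mem_univ _, he.1⟩

lemma card_filter_mem_sym2_le (T : Finset V) (e : Sym2 V) : (T.filter (· ∈ e)).card ≤ 2 := by
  induction e using Sym2.ind with
  | _ a b =>
    have hsub : T.filter (· ∈ s(a,b)) ⊆ {a, b} := by
      intro x hx
      rw [Finset.mem_filter, Sym2.mem_iff] at hx
      simp [hx.2]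
    calc (T.filter (· ∈ s(a,b))).card ≤ ({a,b} : Finset V).card := Finset.card_le_card hsub
      _ ≤ 2 := Finset.card_le_two

lemma arith1 {a b c : ℕ} (hs : 1 ≤ c) (hb : 0 < b) (h : a * (4*c) ≤ (c-1)*(2*b)) : 2*a < b := by
  rcases Nat.exists_eq_add_of_le hs with ⟨c', rfl⟩
  by_contra hcon
  push_neg at hcon
  have h2 : (1 + c' - 1) = c' := by omega
  rw [h2] at h
  have h3 : c' * b ≤ c' * (2*a) := Nat.mul_le_mul_left _ hcon
  nlinarith

/-- trim: either a nonempty W all of whose restricted degrees are ≥ s, or few edges. -/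
lemma trim (s : ℕ) : ∀ (N : ℕ) (A : Finset V) (E : Finset (Sym2 V)), A.card = N →
    (∀ e ∈ E, ∀ v, v ∈ e → v ∈ A) →
    (∃ W, W ⊆ A ∧ W.Nonempty ∧
      ∀ v ∈ W, s ≤ deg (E.filter (fun e => ∀ x, x ∈ e → x ∈ W)) v) ∨
    E.card ≤ (s - 1) * A.card := by
  intro N
  induction N using Nat.strong_induction_on with
  | _ N ih =>
    intro A E hcard hend
    by_cases hA : A.Nonempty
    · by_cases hall : ∀ v ∈ A, s ≤ deg E v
      · left
        refine ⟨A, Finset.Subset.refl A, hA, fun v hv => ?_⟩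
        have : E.filter (fun e => ∀ x, x ∈ e → x ∈ A) = E :=
          Finset.filter_true_of_mem (fun e he => hend e he)
        rw [this]; exact hall v hv
      · push_neg at hall
        obtain ⟨v₀, hv₀A, hv₀⟩ := hall
        set A' := A.erase v₀ with hA'
        set E' := E.filter (fun e => ¬ v₀ ∈ e) with hE'
        have hcard' : A'.card = N - 1 := by
          rw [hA', Finset.card_erase_of_mem hv₀A, hcard]
        have hN : 0 < N := by rw [← hcard]; exact Finset.card_pos.mpr ⟨v₀, hv₀A⟩
        have hend' : ∀ e ∈ E', ∀ v, v ∈ e → v ∈ A' := by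
          intro e he v hve
          rw [hE', Finset.mem_filter] at he
          exact Finset.mem_erase.mpr ⟨fun h => he.2 (h ▸ hve), hend e he.1 v hve⟩
        have := ih (N - 1) (by omega) A' E' hcard' hend'
        rcases this with ⟨W, hWA, hWne, hWdeg⟩ | hle
        · left
          refine ⟨W, hWA.trans (Finset.erase_subset _ _), hWne, fun v hv => ?_⟩
          have : E.filter (fun e => ∀ x, x ∈ e → x ∈ W)
              = E'.filter (fun e => ∀ x, x ∈ e → x ∈ W) := by
            rw [hE', Finset.filter_filter]
            apply Finset.filter_congr
            intro e _
            constructor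
            · intro h
              refine ⟨fun hv₀e => ?_, h⟩
              have := hWA (h v₀ hv₀e)
              exact (Finset.mem_erase.mp this).1 rfl
            · exact fun h => h.2
          rw [this]; exact hWdeg v hv
        · right
          have hsplit : E.card = E'.card + deg E v₀ := by
            rw [hE', deg]
            rw [← Finset.card_filter_add_card_filter_not (p := fun e => v₀ ∈ e)]
            omega
          have h1 : deg E v₀ ≤ s - 1 := by omega
          have : E.card ≤ (s-1) * (N - 1) + (s-1) := by
            rw [hsplit, hcard'] at *
            omega
          rw [hcard]
          calc E.card ≤ (s-1) * (N-1) + (s-1) := this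
            _ ≤ (s-1) * N := by
              have : (s-1) * (N-1) + (s-1) = (s-1) * (N - 1 + 1) := by ring
              rw [this]
              exact Nat.mul_le_mul_left _ (by omega)
    · right
      rw [Finset.not_nonempty_iff_eq_empty] at hA
      have : E = ∅ := by
        rw [Finset.eq_empty_iff_forall_notMem]
        intro e he
        induction e using Sym2.ind with
        | _ a b =>
          have := hend _ he a (by simp)
          simp [hA] at this
      simp [this]

/-- maximal subgraph with degree cap -/
lemma exists_max (Efull : Finset (Sym2 V)) (c : ℕ) :
    ∃ E ⊆ Efull, (∀ v, deg E v ≤ c) ∧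
      ∀ e ∈ Efull, e ∉ E → ∃ v, v ∈ e ∧ c ≤ deg E v := by
  obtain ⟨E, hE, hmax⟩ := Finset.exists_max_image
    ((Efull.powerset).filter (fun E => ∀ v, deg E v ≤ c)) (fun E => E.card)
    ⟨∅, Finset.mem_filter.mpr ⟨Finset.empty_mem_powerset _, fun v => by
      rw [deg, Finset.filter_empty, Finset.card_empty]; exact Nat.zero_le _⟩⟩
  rw [Finset.mem_filter, Finset.mem_powerset] at hE
  refine ⟨E, hE.1, hE.2, fun e he hne => ?_⟩
  by_contra hcon
  push_neg at hcon
  have hdegs : ∀ v, deg (insert e E) v ≤ c := by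
    intro v
    by_cases hv : v ∈ e
    · have h1 : deg (insert e E) v ≤ deg E v + 1 := by
        rw [deg, deg, Finset.filter_insert, if_pos hv]
        exact (Finset.card_insert_le _ _)
      have := hcon v hv
      omega
    · have h1 : deg (insert e E) v = deg E v := by
        rw [deg, deg, Finset.filter_insert, if_neg hv]
      rw [h1]; exact hE.2 v
  have hmem : insert e E ∈ (Efull.powerset).filter (fun E => ∀ v, deg E v ≤ c) := by
    rw [Finset.mem_filter, Finset.mem_powerset]
    exact ⟨Finset.insert_subset he hE.1, hdegs⟩
  have := hmax _ hmem
  rw [Finset.card_insert_of_notMem hne] at this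
  omega

/-- The good outcome: a nonempty vertex set with an edge set all of whose degrees lie in [s,4s]. -/
def Win (G : SimpleGraph V) [DecidableRel G.Adj] (s : ℕ) : Prop :=
  ∃ (W : Finset V) (E : Finset (Sym2 V)), W.Nonempty ∧ E ⊆ G.edgeFinset ∧
    (∀ e ∈ E, ∀ x, x ∈ e → x ∈ W) ∧ ∀ v ∈ W, s ≤ deg E v ∧ deg E v ≤ 4*s

lemma step (G : SimpleGraph V) [DecidableRel G.Adj] (s : ℕ) (hs : 1 ≤ s) :
    ∀ k : ℕ, ∀ A B : Finset V, ∀ m : ℕ,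
    Disjoint A B → A.Nonempty → A.card = B.card →
    (∀ a ∈ A, m ≤ (B.filter (fun b => G.Adj a b)).card) →
    4*s*k + 4*s < m →
    B.card < 2^k * (m - 4*s*k) →
    Win G s := by
  intro k
  induction k with
  | zero =>
    intro A B m _ hAne _ hnb hm hsize
    obtain ⟨a, ha⟩ := hAne
    have h1 : m ≤ B.card := (hnb a ha).trans (Finset.card_le_card (Finset.filter_subset _ _))
    simp only [pow_zero, one_mul, Nat.mul_zero, Nat.sub_zero] at hsize
    omega
  | succ k ih =>
    intro A B m hAB hAne hcards hnb hm hsize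
    have hrw : 4*s*(k+1) = 4*s*k + 4*s := by ring
    rw [hrw] at hm hsize
    have hBpos : 0 < B.card := by
      obtain ⟨a, ha⟩ := hAne
      have h1 : m ≤ B.card := (hnb a ha).trans (Finset.card_le_card (Finset.filter_subset _ _))
      omega
    -- the bipartite edge set between A and B
    set Efull : Finset (Sym2 V) :=
      G.edgeFinset.filter (fun e => ∃ a ∈ A, ∃ b ∈ B, e = s(a,b)) with hEfull
    obtain ⟨E, hEsub, hEcap, hEmax⟩ := exists_max Efull (4*s)
    have hEend : ∀ e ∈ E, ∀ v, v ∈ e → v ∈ A ∪ B := by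
      intro e he v hv
      have := hEsub he
      rw [hEfull, Finset.mem_filter] at this
      obtain ⟨-, a, haA, b, hbB, rfl⟩ := this
      rw [Sym2.mem_iff] at hv
      rcases hv with rfl | rfl
      · exact Finset.mem_union_left _ haA
      · exact Finset.mem_union_right _ hbB
    rcases trim s (A ∪ B).card (A ∪ B) E rfl hEend with ⟨W, _, hWne, hWdeg⟩ | hEcard
    · -- WIN
      refine ⟨W, E.filter (fun e => ∀ x, x ∈ e → x ∈ W), hWne, ?_, ?_, ?_⟩
      · intro e he
        have h1 := (Finset.filter_subset _ _ he)
        have h2 := hEsub h1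
        rw [hEfull, Finset.mem_filter] at h2
        exact h2.1
      · intro e he x hx
        rw [Finset.mem_filter] at he
        exact he.2 x hx
      · intro v hv
        exact ⟨hWdeg v hv, (deg_mono (Finset.filter_subset _ _) v).trans (hEcap v)⟩
    · -- trim failed; recurse
      have hABcard : (A ∪ B).card = 2 * B.card := by
        rw [Finset.card_union_of_disjoint hAB, hcards]; ring
      rw [hABcard] at hEcard
      set S_B := B.filter (fun b => 4*s ≤ deg E b) with hS_B
      set S_A := A.filter (fun a => 4*s ≤ deg E a) with hS_A
      -- each edge of E has at most one endpoint in B (hence in S_B), one in A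
      have honeB : ∀ e ∈ E, ∀ (T : Finset V), T ⊆ B → (T.filter (· ∈ e)).card ≤ 1 := by
        intro e he T hTB
        have := hEsub he
        rw [hEfull, Finset.mem_filter] at this
        obtain ⟨-, a, haA, b, hbB, rfl⟩ := this
        have hsub : T.filter (· ∈ s(a,b)) ⊆ {b} := by
          intro x hx
          rw [Finset.mem_filter, Sym2.mem_iff] at hx
          rcases hx.2 with rfl | rfl
          · exact absurd (hTB hx.1) (Finset.disjoint_left.mp hAB haA)
          · simp
        exact (Finset.card_le_card hsub).trans (by simp)
      have honeA : ∀ e ∈ E, ∀ (T : Finset V), T ⊆ A → (T.filter (· ∈ e)).card ≤ 1 := by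
        intro e he T hTA
        have := hEsub he
        rw [hEfull, Finset.mem_filter] at this
        obtain ⟨-, a, haA, b, hbB, rfl⟩ := this
        have hsub : T.filter (· ∈ s(a,b)) ⊆ {a} := by
          intro x hx
          rw [Finset.mem_filter, Sym2.mem_iff] at hx
          rcases hx.2 with rfl | rfl
          · simp
          · exact absurd (hTA hx.1) (Finset.disjoint_right.mp hAB hbB)
        exact (Finset.card_le_card hsub).trans (by simp)
      have hSBbound : 2 * S_B.card < B.card := by
        have h1 : S_B.card * (4*s) ≤ ∑ v ∈ S_B, deg E v :=
          le_sum_deg _ _ _ (fun v hv => (Finset.mem_filter.mp hv).2)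
        have h2 : ∑ v ∈ S_B, deg E v ≤ 1 * E.card :=
          sum_deg_le _ _ _ (fun e he => honeB e he _ (Finset.filter_subset _ _))
        have h3 : S_B.card * (4*s) ≤ (s-1) * (2*B.card) := by omega
        exact arith1 hs hBpos h3
      have hSAbound : 2 * S_A.card < B.card := by
        have h1 : S_A.card * (4*s) ≤ ∑ v ∈ S_A, deg E v :=
          le_sum_deg _ _ _ (fun v hv => (Finset.mem_filter.mp hv).2)
        have h2 : ∑ v ∈ S_A, deg E v ≤ 1 * E.card :=
          sum_deg_le _ _ _ (fun e he => honeA e he _ (Finset.filter_subset _ _))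
        have h3 : S_A.card * (4*s) ≤ (s-1) * (2*B.card) := by omega
        exact arith1 hs hBpos h3
      set U_A := A \ S_A with hU_A
      have hUAcard : U_A.card = A.card - S_A.card :=
        Finset.card_sdiff_of_subset (Finset.filter_subset _ _)
      have hUAgt : S_B.card < U_A.card := by
        rw [hUAcard]
        have := hcards
        omega
      -- key neighbor bound for unsaturated a
      have hkey : ∀ a ∈ U_A, m - 4*s ≤ (S_B.filter (fun b => G.Adj a b)).card := by
        intro a ha
        rw [hU_A, Finset.mem_sdiff, hS_A, Finset.mem_filter] at ha
        have hadeg : ¬ (4*s ≤ deg E a) := fun h => ha.2 ⟨ha.1, h⟩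
        have hsplit : B.filter (fun b => G.Adj a b) =
            (S_B.filter (fun b => G.Adj a b)) ∪ ((B \ S_B).filter (fun b => G.Adj a b)) := by
          rw [← Finset.filter_union, Finset.union_sdiff_of_subset (Finset.filter_subset _ _)]
        have hforced : ∀ w ∈ B \ S_B, G.Adj a w → s(a,w) ∈ E := by
          intro w hw hadj
          rw [Finset.mem_sdiff] at hw
          have hwdeg : ¬ (4*s ≤ deg E w) := fun h => hw.2 (Finset.mem_filter.mpr ⟨hw.1, h⟩)
          have hmemfull : s(a,w) ∈ Efull := by
            rw [hEfull, Finset.mem_filter]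
            exact ⟨SimpleGraph.mem_edgeFinset.mpr hadj, a, ha.1, w, hw.1, rfl⟩
          by_contra hnot
          obtain ⟨v, hve, hvdeg⟩ := hEmax _ hmemfull hnot
          rw [Sym2.mem_iff] at hve
          rcases hve with rfl | rfl
          · exact hadeg hvdeg
          · exact hwdeg hvdeg
        have h2 : ((B \ S_B).filter (fun b => G.Adj a b)).card ≤ 4*s :=
          (card_nbrs_le_deg G E a _ hforced).trans (by omega)
        have h3 := hnb a ha.1
        rw [hsplit] at h3
        have h4 := Finset.card_union_le (S_B.filter (fun b => G.Adj a b))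
          ((B \ S_B).filter (fun b => G.Adj a b))
        omega
      have hUAne : U_A.Nonempty := Finset.card_pos.mp (by omega)
      have hSBne : 0 < S_B.card := by
        obtain ⟨a, ha⟩ := hUAne
        have := hkey a ha
        have h1 : (S_B.filter (fun b => G.Adj a b)).card ≤ S_B.card :=
          Finset.card_le_card (Finset.filter_subset _ _)
        omega
      obtain ⟨A', hA'sub, hA'card⟩ := Finset.exists_subset_card_eq (le_of_lt hUAgt)
      refine ih A' S_B (m - 4*s) ?_ ?_ ?_ ?_ ?_ ?_
      · exact hAB.mono (hA'sub.trans (Finset.sdiff_subset)) (Finset.filter_subset _ _)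
      · rw [← Finset.card_pos, hA'card]; exact hSBne
      · rw [hA'card]
      · exact fun a ha => hkey a (hA'sub ha)
      · omega
      · have hXeq : m - 4*s - 4*s*k = m - (4*s*k + 4*s) := by omega
        rw [hXeq]
        have h2 : 2 * S_B.card < 2 * (2^k * (m - (4*s*k + 4*s))) := by
          calc 2 * S_B.card < B.card := hSBbound
            _ < 2^(k+1) * (m - (4*s*k + 4*s)) := hsize
            _ = 2 * (2^k * (m - (4*s*k + 4*s))) := by ring
        omega

end AR

/-- A graph on at most `n` vertices with all degrees in `[d/5, d]`,
`d ≥ 1`, contains a nonempty subgraph `H` whose minimum degree is at least `Δ(H)/4`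
and at least `d / (500 * log₂(8n/d))`. -/
theorem stmt_5 {V : Type*} [Fintype V] [Nonempty V] (G : SimpleGraph V) [DecidableRel G.Adj]
    (n : ℕ) (hn : Fintype.card V ≤ n) (d : ℝ) (hd : 1 ≤ d)
    (hdeg : ∀ v : V, d / 5 ≤ (G.degree v : ℝ) ∧ (G.degree v : ℝ) ≤ d) :
    ∃ H : G.Subgraph, H.verts.Nonempty ∧
      (∀ v ∈ H.verts, ∀ w ∈ H.verts,
        ({x | H.Adj w x}.ncard : ℝ) ≤ 4 * ({x | H.Adj v x}.ncard : ℝ)) ∧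
      (∀ v ∈ H.verts,
        d / (500 * Real.logb 2 (8 * n / d)) ≤ ({x | H.Adj v x}.ncard : ℝ)) := by
  haveI : DecidableEq V := Classical.decEq V
  set L : ℝ := Real.logb 2 (8 * n / d) with hLdef
  have hdpos : (0:ℝ) < d := lt_of_lt_of_le one_pos hd
  have hNpos : 0 < Fintype.card V := Fintype.card_pos
  have hn1 : 1 ≤ n := le_trans hNpos hn
  have hnpos : (0:ℝ) < n := by exact_mod_cast lt_of_lt_of_le Nat.one_pos hn1
  -- d ≤ 5n
  have hd5n : d ≤ 5 * n := by
    obtain ⟨v₀⟩ := (inferInstance : Nonempty V)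
    have h1 := (hdeg v₀).1
    have h2 : (G.degree v₀ : ℝ) < Fintype.card V := by
      exact_mod_cast G.degree_lt_card_verts v₀
    have h3 : (Fintype.card V : ℝ) ≤ n := by exact_mod_cast hn
    nlinarith
  have hxpos : (0:ℝ) < 8 * n / d := by positivity
  -- L ≥ 1/2
  have hL : 1/2 ≤ L := by
    have h85 : (8:ℝ)/5 ≤ 8 * n / d := by
      rw [div_le_div_iff₀ (by norm_num) hdpos]
      nlinarith
    have hsqrt : (2:ℝ) ^ ((1:ℝ)/2) ≤ 8/5 := by
      rw [← Real.sqrt_eq_rpow]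
      have : Real.sqrt 2 ≤ Real.sqrt ((8/5)^2) := Real.sqrt_le_sqrt (by norm_num)
      rwa [Real.sqrt_sq (by norm_num : (0:ℝ) ≤ 8/5)] at this
    have h1 : Real.logb 2 ((2:ℝ) ^ ((1:ℝ)/2)) ≤ L := by
      rw [hLdef]
      exact (Real.logb_le_logb (by norm_num) (by positivity) hxpos).mpr
        (hsqrt.trans h85)
    rwa [Real.logb_rpow (by norm_num) (by norm_num)] at h1
  have hLpos : (0:ℝ) < L := lt_of_lt_of_le (by norm_num) hL
  set t : ℝ := d / (500 * L) with htdef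
  have htpos : 0 < t := by positivity
  by_cases hcase : t ≤ 1
  · -- small case : a single edge
    obtain ⟨v₀⟩ := (inferInstance : Nonempty V)
    have hdegpos : 0 < G.degree v₀ := by
      have h1 := (hdeg v₀).1
      rcases Nat.eq_zero_or_pos (G.degree v₀) with h | h
      · rw [h] at h1; norm_num at h1; nlinarith
      · exact h
    obtain ⟨w₀, hadj⟩ := (G.degree_pos_iff_exists_adj v₀).mp hdegpos
    have hne : v₀ ≠ w₀ := G.ne_of_adj hadj
    set H : G.Subgraph :=
      ⟨{v₀, w₀}, fun x y => (x = v₀ ∧ y = w₀) ∨ (x = w₀ ∧ y = v₀),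
        by rintro x y (⟨rfl, rfl⟩ | ⟨rfl, rfl⟩); exacts [hadj, hadj.symm],
        by rintro x y (⟨rfl, rfl⟩ | ⟨rfl, rfl⟩) <;> simp,
        ⟨by rintro x y (⟨rfl, rfl⟩ | ⟨rfl, rfl⟩) <;> simp⟩⟩ with hHdef
    have hne' : w₀ ≠ v₀ := hne.symm
    have hone : ∀ u ∈ H.verts, ({x | H.Adj u x} : Set V).ncard = 1 := by
      rintro u hu
      simp only [hHdef, Set.mem_insert_iff, Set.mem_singleton_iff] at hu
      rcases hu with rfl | rfl
      · have : ({x | H.Adj u x} : Set V) = {w₀} := by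
          ext x
          show (u = u ∧ x = w₀) ∨ (u = w₀ ∧ x = u) ↔ x ∈ ({w₀} : Set V)
          simp only [Set.mem_singleton_iff]
          tauto
        rw [this, Set.ncard_singleton]
      · have : ({x | H.Adj u x} : Set V) = {v₀} := by
          ext x
          show (u = v₀ ∧ x = u) ∨ (u = u ∧ x = v₀) ↔ x ∈ ({v₀} : Set V)
          simp only [Set.mem_singleton_iff]
          tauto
        rw [this, Set.ncard_singleton]
    refine ⟨H, ⟨v₀, by simp [hHdef]⟩, ?_, ?_⟩
    · intro v hv w hw
      rw [hone v hv, hone w hw]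
      norm_num
    · intro v hv
      rw [hone v hv]
      exact_mod_cast hcase
  · -- main case
    push_neg at hcase
    set s : ℕ := ⌈t⌉₊ with hsdef
    have hts : t ≤ (s:ℝ) := Nat.le_ceil t
    have hs1 : 1 ≤ s := by
      by_contra h
      push_neg at h
      interval_cases s
      · simp at hts; nlinarith
    have hs2t : (s:ℝ) < 2 * t := by
      have h1 : (s:ℝ) < t + 1 := Nat.ceil_lt_add_one (le_of_lt htpos)
      linarith
    set k : ℕ := ⌈L⌉₊ + 1 with hkdef
    have hkL : (k:ℝ) < L + 2 := by
      have h1 : (⌈L⌉₊:ℝ) < L + 1 := Nat.ceil_lt_add_one (le_of_lt hLpos)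
      rw [hkdef]
      push_cast
      linarith
    have hkL' : L + 1 ≤ (k:ℝ) := by
      have h1 : L ≤ (⌈L⌉₊:ℝ) := Nat.le_ceil L
      rw [hkdef]; push_cast; linarith
    have hspos : (0:ℝ) < s := by exact_mod_cast hs1
    have hkpos : (0:ℝ) ≤ k := Nat.cast_nonneg k
    have hpow : 16 * (n:ℝ) / d ≤ (2:ℝ)^(k:ℕ) := by
      have h1 : (2:ℝ)^((k:ℕ):ℝ) = (2:ℝ)^(k:ℕ) := Real.rpow_natCast 2 k
      have h2 : (2:ℝ)^(L+1) ≤ (2:ℝ)^((k:ℕ):ℝ) :=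
        Real.rpow_le_rpow_of_exponent_le (by norm_num) hkL'
      have h3 : (2:ℝ)^(L+1) = (8*n/d) * 2 := by
        rw [Real.rpow_add (by norm_num), Real.rpow_one, hLdef,
          Real.rpow_logb (by norm_num) (by norm_num) hxpos]
      rw [h3, h1] at h2
      calc 16*(n:ℝ)/d = (8*n/d)*2 := by ring
        _ ≤ _ := h2
    have hd_eq : d = 500 * L * t := by
      rw [htdef]; field_simp
    have F1 : 4*(s:ℝ)*((k:ℝ)+2) < d/5 := by
      rw [hd_eq]
      have h1 : (s:ℝ)*((k:ℝ)+2) < (2*t)*(L+4) := by nlinarith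
      nlinarith [mul_nonneg (by linarith : (0:ℝ) ≤ L - 1/2) (le_of_lt htpos)]
    have F2 : d/12 ≤ d/5 - 4*(s:ℝ)*((k:ℝ)+1) := by
      rw [hd_eq]
      have h1 : (s:ℝ)*((k:ℝ)+1) < (2*t)*(L+3) := by nlinarith
      nlinarith [mul_nonneg (by linarith : (0:ℝ) ≤ L - 1/2) (le_of_lt htpos)]
    set D5 : ℕ := ⌈d/5⌉₊ with hD5def
    have hD5 : (d/5 : ℝ) ≤ (D5 : ℝ) := Nat.le_ceil _
    have c1 : 4*s*k + 4*s + 4*s < D5 := by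
      have hcast : ((4*s*k + 4*s + 4*s : ℕ) : ℝ) = 4*(s:ℝ)*((k:ℝ)+2) := by push_cast; ring
      have h := F1.trans_le hD5
      rw [← hcast] at h
      exact_mod_cast h
    set m₁ : ℕ := D5 - 4*s with hm1def
    have hm1 : 4*s*k + 4*s < m₁ := Nat.lt_sub_of_add_lt c1
    have h4sD5 : 4*s ≤ D5 := le_of_lt (lt_of_le_of_lt (Nat.le_add_left _ _) c1)
    have h4skm1 : 4*s*k ≤ m₁ := le_of_lt (lt_of_le_of_lt (Nat.le_add_right _ _) hm1)
    have hXcast : ((m₁ - 4*s*k : ℕ):ℝ) = (D5:ℝ) - 4*(s:ℝ) - 4*(s:ℝ)*(k:ℝ) := by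
      rw [Nat.cast_sub h4skm1, hm1def, Nat.cast_sub h4sD5]
      push_cast
      ring
    have hXlb : d/12 ≤ ((m₁ - 4*s*k : ℕ):ℝ) := by
      rw [hXcast]
      have : 4*(s:ℝ)*((k:ℝ)+1) = 4*(s:ℝ) + 4*(s:ℝ)*(k:ℝ) := by ring
      linarith [F2, hD5]
    -- top-level combinatorial step
    obtain ⟨E, hEsub, hEcap, hEmax⟩ := AR.exists_max G.edgeFinset (4*s)
    have hwin : AR.Win G s := by
      rcases AR.trim s (Finset.univ : Finset V).card Finset.univ E rfl
          (fun e _ v _ => Finset.mem_univ v) with ⟨W, _, hWne, hWdeg⟩ | hEcard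
      · exact ⟨W, E.filter (fun e => ∀ x, x ∈ e → x ∈ W), hWne,
          (Finset.filter_subset _ _).trans hEsub,
          fun e he x hx => (Finset.mem_filter.mp he).2 x hx,
          fun v hv => ⟨hWdeg v hv,
            (AR.deg_mono (Finset.filter_subset _ _) v).trans (hEcap v)⟩⟩
      · rw [Finset.card_univ] at hEcard
        set S := Finset.univ.filter (fun v => 4*s ≤ AR.deg E v) with hSdef
        have hSsmall : 2 * S.card < Fintype.card V := by
          have h1 : S.card * (4*s) ≤ ∑ v ∈ S, AR.deg E v :=
            AR.le_sum_deg _ _ _ (fun v hv => (Finset.mem_filter.mp hv).2)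
          have h2 : ∑ v ∈ S, AR.deg E v ≤ 2 * E.card :=
            AR.sum_deg_le _ _ 2 (fun e _ => AR.card_filter_mem_sym2_le _ _)
          have h3 : S.card * (4*s) ≤ (s-1)*(2*Fintype.card V) := by
            calc S.card * (4*s) ≤ 2*E.card := le_trans h1 h2
              _ ≤ 2*((s-1)*Fintype.card V) := by omega
              _ = (s-1)*(2*Fintype.card V) := by ring
          exact AR.arith1 hs1 hNpos h3
        set U := Finset.univ \ S with hUdef
        have hUcard : U.card = Fintype.card V - S.card := by
          rw [hUdef, Finset.card_sdiff_of_subset (Finset.subset_univ S), Finset.card_univ]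
        have hkey : ∀ u ∈ U, m₁ ≤ (S.filter (fun b => G.Adj u b)).card := by
          intro u hu
          rw [hUdef, Finset.mem_sdiff] at hu
          have hudeg : ¬ (4*s ≤ AR.deg E u) := fun h =>
            hu.2 (Finset.mem_filter.mpr ⟨Finset.mem_univ u, h⟩)
          have hsplit : Finset.univ.filter (fun b => G.Adj u b) =
              (S.filter (fun b => G.Adj u b)) ∪ (U.filter (fun b => G.Adj u b)) := by
            rw [← Finset.filter_union, hUdef,
              Finset.union_sdiff_of_subset (Finset.subset_univ S)]
          have hforced : ∀ w ∈ U, G.Adj u w → s(u,w) ∈ E := by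
            intro w hw hadj
            rw [hUdef, Finset.mem_sdiff] at hw
            have hwdeg : ¬ (4*s ≤ AR.deg E w) := fun h =>
              hw.2 (Finset.mem_filter.mpr ⟨Finset.mem_univ w, h⟩)
            by_contra hnot
            obtain ⟨v, hve, hvdeg⟩ := hEmax _
              (SimpleGraph.mem_edgeFinset.mpr ((G.mem_edgeSet).mpr hadj)) hnot
            rw [Sym2.mem_iff] at hve
            rcases hve with rfl | rfl
            · exact hudeg hvdeg
            · exact hwdeg hvdeg
          have h2 : (U.filter (fun b => G.Adj u b)).card ≤ 4*s :=
            (AR.card_nbrs_le_deg G E u U hforced).trans (hEcap u)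
          have h3 : D5 ≤ (Finset.univ.filter (fun b => G.Adj u b)).card := by
            have h5 : D5 ≤ G.degree u := Nat.ceil_le.mpr (hdeg u).1
            rwa [SimpleGraph.degree, SimpleGraph.neighborFinset_eq_filter] at h5
          rw [hsplit] at h3
          have h4 := Finset.card_union_le (S.filter (fun b => G.Adj u b))
            (U.filter (fun b => G.Adj u b))
          omega
        have hUne : U.Nonempty := by
          rw [← Finset.card_pos, hUcard]
          omega
        have hSne : 0 < S.card := by
          obtain ⟨u, hu⟩ := hUne
          have h1 := hkey u hu
          have h2 : (S.filter (fun b => G.Adj u b)).card ≤ S.card :=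
            Finset.card_le_card (Finset.filter_subset _ _)
          have hm1pos : 0 < m₁ := by omega
          omega
        have hSU : S.card ≤ U.card := by rw [hUcard]; omega
        obtain ⟨A₁, hA₁sub, hA₁card⟩ := Finset.exists_subset_card_eq hSU
        have hScard : S.card < 2^k * (m₁ - 4*s*k) := by
          have hn2 : n ≤ 2 * (2^k * (m₁ - 4*s*k)) := by
            have hreal : (n:ℝ) ≤ 2 * ((2:ℝ)^(k:ℕ) * ((m₁ - 4*s*k : ℕ):ℝ)) := by
              have hprod : 4*(n:ℝ)/3 ≤ (2:ℝ)^(k:ℕ) * ((m₁ - 4*s*k : ℕ):ℝ) := by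
                have h1 : (16*(n:ℝ)/d) * (d/12) ≤ (2:ℝ)^(k:ℕ) * ((m₁ - 4*s*k : ℕ):ℝ) :=
                  mul_le_mul hpow hXlb (by positivity) (by positivity)
                have h2 : (16*(n:ℝ)/d) * (d/12) = 4*(n:ℝ)/3 := by
                  field_simp
                  ring
                linarith [h1, h2.symm.le]
              linarith
            have hcast : ((2 * (2^k * (m₁ - 4*s*k)) : ℕ) : ℝ)
                = 2 * ((2:ℝ)^(k:ℕ) * ((m₁ - 4*s*k : ℕ):ℝ)) := by push_cast; ring
            exact_mod_cast hcast ▸ hreal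
          have h2 : 2 * S.card < 2 * (2^k * (m₁ - 4*s*k)) :=
            lt_of_lt_of_le (lt_of_lt_of_le hSsmall hn) hn2
          exact Nat.lt_of_mul_lt_mul_left h2
        exact AR.step G s hs1 k A₁ S m₁
          (Finset.disjoint_of_subset_left hA₁sub
            (by rw [hUdef]; exact Finset.sdiff_disjoint))
          (by rw [← Finset.card_pos, hA₁card]; exact hSne)
          hA₁card
          (fun a ha => hkey a (hA₁sub ha))
          hm1 hScard
    -- convert Win to the required subgraph
    obtain ⟨W, E', hWne, hE'sub, hE'end, hE'deg⟩ := hwin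
    refine ⟨⟨↑W, fun x y => s(x,y) ∈ E',
      fun {x y} h => (G.mem_edgeSet).mp (SimpleGraph.mem_edgeFinset.mp (hE'sub h)),
      fun {x y} h => hE'end _ h x (by simp),
      ⟨fun x y h => show s(y,x) ∈ E' by rwa [Sym2.eq_swap]⟩⟩, ?_, ?_, ?_⟩
    · obtain ⟨w₀, hw₀⟩ := hWne
      exact ⟨w₀, hw₀⟩
    · intro v hv w hw
      have hv' : v ∈ W := hv
      have hw' : w ∈ W := hw
      have hcv : ({x | s(v,x) ∈ E'} : Set V).ncard = AR.deg E' v := by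
        have h1 : ({x | s(v,x) ∈ E'} : Set V) =
            ↑(Finset.univ.filter (fun x => s(v,x) ∈ E')) := by
          ext x; simp
        rw [h1, Set.ncard_coe_finset, AR.deg_eq_card_nbrs]
      have hcw : ({x | s(w,x) ∈ E'} : Set V).ncard = AR.deg E' w := by
        have h1 : ({x | s(w,x) ∈ E'} : Set V) =
            ↑(Finset.univ.filter (fun x => s(w,x) ∈ E')) := by
          ext x; simp
        rw [h1, Set.ncard_coe_finset, AR.deg_eq_card_nbrs]
      show (({x | s(w,x) ∈ E'} : Set V).ncard : ℝ) ≤ 4 * (({x | s(v,x) ∈ E'} : Set V).ncard : ℝ)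
      rw [hcv, hcw]
      have d1 := (hE'deg v hv').1
      have d2 := (hE'deg w hw').2
      have e1 : (s:ℝ) ≤ (AR.deg E' v : ℝ) := by exact_mod_cast d1
      have e2 : (AR.deg E' w : ℝ) ≤ 4*(s:ℝ) := by exact_mod_cast d2
      linarith
    · intro v hv
      have hv' : v ∈ W := hv
      have hcv : ({x | s(v,x) ∈ E'} : Set V).ncard = AR.deg E' v := by
        have h1 : ({x | s(v,x) ∈ E'} : Set V) =
            ↑(Finset.univ.filter (fun x => s(v,x) ∈ E')) := by
          ext x; simp
        rw [h1, Set.ncard_coe_finset, AR.deg_eq_card_nbrs]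
      show t ≤ (({x | s(v,x) ∈ E'} : Set V).ncard : ℝ)
      rw [hcv]
      have d1 := (hE'deg v hv').1
      have e1 : (s:ℝ) ≤ (AR.deg E' v : ℝ) := by exact_mod_cast d1
      linarith
end

section
/- Let d be a positive integer, 0 < ε ≤ 1/100, and t a positive integer. If X ~ Bin(d, ε), then P(X ≥ ⌊(5/4)εd⌋ + t) ≤ exp(-(t + εd)/60). -/
open Finset Real

private lemma exp_le_quartic {x : ℝ} (h1 : 0 ≤ x) (h2 : x ≤ 1) :
    Real.exp x ≤ 1 + x + x ^ 2 / 2 + x ^ 3 / 6 + x ^ 4 * 5 / 96 := by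
  have h := Real.exp_bound' h1 h2 (n := 4) (by norm_num)
  refine h.trans (le_of_eq ?_)
  simp [Finset.sum_range_succ, Nat.factorial]
  ring

private lemma expN1 : Real.exp (133 / 300) ≤ 25 / 16 := by
  refine (exp_le_quartic (by norm_num) (by norm_num)).trans ?_
  norm_num

private lemma expN2 : Real.exp (16 / 75) ≤ 5 / 4 := by
  refine (exp_le_quartic (by norm_num) (by norm_num)).trans ?_
  norm_num

private lemma expN3 : Real.exp (1 / 60) ≤ 5 / 4 := by
  refine (exp_le_quartic (by norm_num) (by norm_num)).trans ?_
  norm_num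

private lemma expNB : Real.exp (3 / 100) ≤ 5 / 4 := by
  refine (exp_le_quartic (by norm_num) (by norm_num)).trans ?_
  norm_num

private lemma binom_sum (n : ℕ) (ε : ℝ) :
    ∑ k ∈ Finset.range (n + 1), (5 / 4 * ε) ^ k * (1 - ε) ^ (n - k) * (n.choose k : ℝ)
      = (1 + ε / 4) ^ n := by
  rw [← add_pow (5 / 4 * ε) (1 - ε) n]
  ring_nf

private lemma chernoff (d m : ℕ) (ε : ℝ) (hε0 : 0 ≤ ε) (hε1 : ε ≤ 1) :
    ∑ k ∈ (Finset.range (d + 1)).filter (fun k => m ≤ k),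
      (d.choose k : ℝ) * ε ^ k * (1 - ε) ^ (d - k) ≤ (1 + ε / 4) ^ d / (5 / 4) ^ m := by
  have h1ε : (0:ℝ) ≤ 1 - ε := by linarith
  have key : ∀ k ∈ (Finset.range (d + 1)).filter (fun k => m ≤ k),
      (d.choose k : ℝ) * ε ^ k * (1 - ε) ^ (d - k)
        ≤ ((5 / 4 * ε) ^ k * (1 - ε) ^ (d - k) * (d.choose k : ℝ)) / (5 / 4) ^ m := by
    intro k hk
    simp only [Finset.mem_filter, Finset.mem_range] at hk
    have hpow : ((5:ℝ) / 4) ^ m ≤ (5 / 4) ^ k := pow_le_pow_right₀ (by norm_num) hk.2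
    have hratio : (1:ℝ) ≤ (5 / 4) ^ k / (5 / 4) ^ m :=
      (one_le_div (by positivity)).mpr hpow
    have hterm : (0:ℝ) ≤ (d.choose k : ℝ) * ε ^ k * (1 - ε) ^ (d - k) := by positivity
    calc (d.choose k : ℝ) * ε ^ k * (1 - ε) ^ (d - k)
        ≤ ((d.choose k : ℝ) * ε ^ k * (1 - ε) ^ (d - k)) * ((5 / 4) ^ k / (5 / 4) ^ m) :=
          le_mul_of_one_le_right hterm hratio
      _ = ((5 / 4 * ε) ^ k * (1 - ε) ^ (d - k) * (d.choose k : ℝ)) / (5 / 4) ^ m := by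
          rw [mul_pow]; ring
  calc ∑ k ∈ (Finset.range (d + 1)).filter (fun k => m ≤ k),
        (d.choose k : ℝ) * ε ^ k * (1 - ε) ^ (d - k)
      ≤ ∑ k ∈ (Finset.range (d + 1)).filter (fun k => m ≤ k),
        ((5 / 4 * ε) ^ k * (1 - ε) ^ (d - k) * (d.choose k : ℝ)) / (5 / 4) ^ m :=
        Finset.sum_le_sum key
    _ ≤ ∑ k ∈ Finset.range (d + 1),
        ((5 / 4 * ε) ^ k * (1 - ε) ^ (d - k) * (d.choose k : ℝ)) / (5 / 4) ^ m := by
        refine Finset.sum_le_sum_of_subset_of_nonneg (Finset.filter_subset _ _) ?_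
        intro k _ _
        positivity
    _ = (∑ k ∈ Finset.range (d + 1),
        (5 / 4 * ε) ^ k * (1 - ε) ^ (d - k) * (d.choose k : ℝ)) / (5 / 4) ^ m := by
        rw [Finset.sum_div]
    _ = (1 + ε / 4) ^ d / (5 / 4) ^ m := by rw [binom_sum]

private lemma union_bound (d t : ℕ) (ε : ℝ) (hε0 : 0 ≤ ε) (hε1 : ε ≤ 1) :
    ∑ k ∈ (Finset.range (d + 1)).filter (fun k => t ≤ k),
      (d.choose k : ℝ) * ε ^ k * (1 - ε) ^ (d - k) ≤ (d.choose t : ℝ) * ε ^ t := by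
  have h1ε : (0:ℝ) ≤ 1 - ε := by linarith
  rcases le_or_gt t d with htd | htd
  · have himg : (Finset.range (d + 1)).filter (fun k => t ≤ k)
        = (Finset.range (d - t + 1)).image (· + t) := by
      ext k
      simp only [Finset.mem_filter, Finset.mem_range, Finset.mem_image]
      constructor
      · rintro ⟨hk, htk⟩; exact ⟨k - t, by omega, by omega⟩
      · rintro ⟨j, hj, rfl⟩; omega
    rw [himg, Finset.sum_image (by intro a _ b _ h; simp only at h; omega)]
    have step : ∀ j ∈ Finset.range (d - t + 1),
        (d.choose (j + t) : ℝ) * ε ^ (j + t) * (1 - ε) ^ (d - (j + t))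
          ≤ (d.choose t : ℝ) * ε ^ t *
            (((d - t).choose j : ℝ) * ε ^ j * (1 - ε) ^ ((d - t) - j)) := by
      intro j hj
      simp only [Finset.mem_range] at hj
      have hch : (d.choose (j + t) : ℝ) ≤ (d.choose t : ℝ) * ((d - t).choose j : ℝ) := by
        have hid := Nat.choose_mul (n := d) (k := j + t) (s := t) (by omega)
        have h1 : 1 ≤ (j + t).choose t := Nat.choose_pos (by omega)
        have : d.choose (j + t) ≤ d.choose t * ((d - t).choose j) := by
          calc d.choose (j + t) ≤ d.choose (j + t) * ((j + t).choose t) :=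
                Nat.le_mul_of_pos_right _ h1
            _ = d.choose t * ((d - t).choose (j + t - t)) := hid
            _ = d.choose t * ((d - t).choose j) := by rw [Nat.add_sub_cancel]
        exact_mod_cast this
      have hd1 : d - (j + t) = (d - t) - j := by omega
      have hnn : (0:ℝ) ≤ ε ^ (j + t) * (1 - ε) ^ (d - (j + t)) := by positivity
      calc (d.choose (j + t) : ℝ) * ε ^ (j + t) * (1 - ε) ^ (d - (j + t))
          = (d.choose (j + t) : ℝ) * (ε ^ (j + t) * (1 - ε) ^ (d - (j + t))) := by ring
        _ ≤ ((d.choose t : ℝ) * ((d - t).choose j : ℝ)) *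
              (ε ^ (j + t) * (1 - ε) ^ (d - (j + t))) :=
            mul_le_mul_of_nonneg_right hch hnn
        _ = (d.choose t : ℝ) * ε ^ t *
              (((d - t).choose j : ℝ) * ε ^ j * (1 - ε) ^ ((d - t) - j)) := by
            rw [hd1, pow_add]; ring
    calc ∑ j ∈ Finset.range (d - t + 1),
          (d.choose (j + t) : ℝ) * ε ^ (j + t) * (1 - ε) ^ (d - (j + t))
        ≤ ∑ j ∈ Finset.range (d - t + 1), (d.choose t : ℝ) * ε ^ t *
            (((d - t).choose j : ℝ) * ε ^ j * (1 - ε) ^ ((d - t) - j)) :=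
          Finset.sum_le_sum step
      _ = (d.choose t : ℝ) * ε ^ t * ∑ j ∈ Finset.range (d - t + 1),
            (((d - t).choose j : ℝ) * ε ^ j * (1 - ε) ^ ((d - t) - j)) := by
          rw [Finset.mul_sum]
      _ = (d.choose t : ℝ) * ε ^ t := by
          have : ∑ j ∈ Finset.range (d - t + 1),
              (((d - t).choose j : ℝ) * ε ^ j * (1 - ε) ^ ((d - t) - j)) = 1 := by
            have hb := add_pow ε (1 - ε) (d - t)
            have : (ε + (1 - ε)) ^ (d - t) = (1:ℝ) := by norm_num
            rw [this] at hb
            calc ∑ j ∈ Finset.range (d - t + 1),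
                  (((d - t).choose j : ℝ) * ε ^ j * (1 - ε) ^ ((d - t) - j))
                = ∑ j ∈ Finset.range (d - t + 1),
                  ε ^ j * (1 - ε) ^ ((d - t) - j) * ((d - t).choose j : ℝ) :=
                Finset.sum_congr rfl (fun j _ => by ring)
              _ = 1 := hb.symm
          rw [this, mul_one]
  · have hempty : (Finset.range (d + 1)).filter (fun k => t ≤ k) = ∅ := by
      apply Finset.filter_eq_empty_iff.mpr
      intro k hk
      simp only [Finset.mem_range] at hk
      omega
    rw [hempty, Finset.sum_empty]
    positivity

/-- For `X ~ Bin(d, ε)` with `0 < ε ≤ 1/100` and positive integers `d, t`,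
`P(X ≥ ⌊(5/4)εd⌋ + t) ≤ exp(-(t + εd)/60)`. -/
theorem stmt_8 (d : ℕ) (hd : 1 ≤ d) (t : ℕ) (ht : 1 ≤ t) (ε : ℝ)
    (hε0 : 0 < ε) (hε : ε ≤ 1 / 100) :
    ∑ k ∈ (Finset.range (d + 1)).filter (fun k => ⌊5 / 4 * ε * (d : ℝ)⌋₊ + t ≤ k),
      (d.choose k : ℝ) * ε ^ k * (1 - ε) ^ (d - k) ≤
    Real.exp (-((t : ℝ) + ε * d) / 60) := by
  have hε1 : ε ≤ 1 := hε.trans (by norm_num)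
  have hd0 : (0:ℝ) < d := by exact_mod_cast hd
  have ht1 : (1:ℝ) ≤ t := by exact_mod_cast ht
  have hμ0 : 0 < ε * d := by positivity
  rcases Nat.eq_zero_or_pos ⌊5 / 4 * ε * (d : ℝ)⌋₊ with hf0 | hf1
  · -- small-mean case: floor is zero, use union bound
    simp only [hf0, zero_add]
    have hμ45 : ε * d < 4 / 5 := by
      have h1 : 5 / 4 * ε * (d:ℝ) < 1 := Nat.floor_eq_zero.mp hf0
      linarith
    have hchoose : (d.choose t : ℝ) ≤ (d:ℝ) ^ t := by
      exact_mod_cast Nat.choose_le_pow d t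
    have h1 : (d.choose t : ℝ) * ε ^ t ≤ (ε * d) ^ t := by
      calc (d.choose t : ℝ) * ε ^ t ≤ (d:ℝ) ^ t * ε ^ t :=
            mul_le_mul_of_nonneg_right hchoose (by positivity)
        _ = (ε * d) ^ t := by rw [mul_pow]; ring
    have h2 : (ε * d) ^ t ≤ (4 / 5 : ℝ) ^ t := pow_le_pow_left₀ hμ0.le hμ45.le t
    have key : Real.exp (((t:ℝ) + ε * d) / 60) ≤ (5 / 4 : ℝ) ^ t := by
      have hle : ((t:ℝ) + ε * d) / 60 ≤ (t:ℝ) * (3 / 100) := by nlinarith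
      calc Real.exp (((t:ℝ) + ε * d) / 60) ≤ Real.exp ((t:ℝ) * (3 / 100)) :=
            Real.exp_le_exp.mpr hle
        _ = Real.exp (3 / 100) ^ t := Real.exp_nat_mul _ t
        _ ≤ (5 / 4 : ℝ) ^ t := pow_le_pow_left₀ (Real.exp_pos _).le expNB t
    have h3 : (4 / 5 : ℝ) ^ t ≤ Real.exp (-((t : ℝ) + ε * d) / 60) := by
      rw [neg_div, Real.exp_neg]
      have heq : (4 / 5 : ℝ) ^ t = ((5 / 4 : ℝ) ^ t)⁻¹ := by
        rw [← inv_pow]; norm_num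
      rw [heq]
      exact inv_anti₀ (Real.exp_pos _) key
    exact (union_bound d t ε hε0.le hε1).trans (h1.trans (h2.trans h3))
  · -- main case: floor ≥ 1, Chernoff bound with c = 5/4
    obtain ⟨a, hfa⟩ := Nat.exists_eq_add_of_le hf1
    obtain ⟨b, htb⟩ := Nat.exists_eq_add_of_le ht
    have hμf : ε * d ≤ 4 / 5 * ((⌊5 / 4 * ε * (d : ℝ)⌋₊ : ℝ) + 1) := by
      have := Nat.lt_floor_add_one (5 / 4 * ε * (d : ℝ))
      linarith
    have key : Real.exp (ε * d / 4 + ((t:ℝ) + ε * d) / 60)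
        ≤ (5 / 4 : ℝ) ^ (⌊5 / 4 * ε * (d : ℝ)⌋₊ + t) := by
      have hexp : ε * d / 4 + ((t:ℝ) + ε * d) / 60
          ≤ (a:ℝ) * (16 / 75) + (b:ℝ) * (1 / 60) + 133 / 300 := by
        have hfc : (⌊5 / 4 * ε * (d : ℝ)⌋₊ : ℝ) = 1 + (a:ℝ) := by
          rw [hfa]; push_cast; ring
        have htc : (t:ℝ) = 1 + (b:ℝ) := by rw [htb]; push_cast; ring
        rw [hfc] at hμf
        rw [htc]
        nlinarith
      calc Real.exp (ε * d / 4 + ((t:ℝ) + ε * d) / 60)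
          ≤ Real.exp ((a:ℝ) * (16 / 75) + (b:ℝ) * (1 / 60) + 133 / 300) :=
            Real.exp_le_exp.mpr hexp
        _ = Real.exp (16 / 75) ^ a * Real.exp (1 / 60) ^ b * Real.exp (133 / 300) := by
            rw [Real.exp_add, Real.exp_add, Real.exp_nat_mul, Real.exp_nat_mul]
        _ ≤ (5 / 4 : ℝ) ^ a * (5 / 4 : ℝ) ^ b * (25 / 16) := by
            have p1 := pow_le_pow_left₀ (Real.exp_pos _).le expN2 a
            have p2 := pow_le_pow_left₀ (Real.exp_pos _).le expN3 b
            have e1 : (0:ℝ) ≤ Real.exp (16 / 75) ^ a := by positivity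
            have e2 : (0:ℝ) ≤ Real.exp (1 / 60) ^ b := by positivity
            have e3 : (0:ℝ) ≤ Real.exp (133 / 300) := (Real.exp_pos _).le
            have p3 := expN1
            have q1 : (0:ℝ) ≤ (5/4:ℝ) ^ a := by positivity
            have q2 : (0:ℝ) ≤ (5/4:ℝ) ^ b := by positivity
            exact mul_le_mul (mul_le_mul p1 p2 e2 q1) p3 e3 (by positivity)
        _ = (5 / 4 : ℝ) ^ (⌊5 / 4 * ε * (d : ℝ)⌋₊ + t) := by
            rw [hfa, htb, pow_add, pow_add, pow_add]
            norm_num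
            ring
    calc ∑ k ∈ (Finset.range (d + 1)).filter
          (fun k => ⌊5 / 4 * ε * (d : ℝ)⌋₊ + t ≤ k),
          (d.choose k : ℝ) * ε ^ k * (1 - ε) ^ (d - k)
        ≤ (1 + ε / 4) ^ d / (5 / 4) ^ (⌊5 / 4 * ε * (d : ℝ)⌋₊ + t) :=
          chernoff d _ ε hε0.le hε1
      _ ≤ Real.exp (ε * d / 4) / (5 / 4) ^ (⌊5 / 4 * ε * (d : ℝ)⌋₊ + t) := by
          gcongr
          calc (1 + ε / 4) ^ d ≤ Real.exp (ε / 4) ^ d :=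
                pow_le_pow_left₀ (by positivity)
                  (by linarith [Real.add_one_le_exp (ε / 4)]) d
            _ = Real.exp ((d:ℝ) * (ε / 4)) := (Real.exp_nat_mul _ d).symm
            _ = Real.exp (ε * d / 4) := by congr 1; ring
      _ ≤ Real.exp (-((t : ℝ) + ε * d) / 60) := by
          rw [div_le_iff₀ (by positivity)]
          calc Real.exp (ε * d / 4)
              = Real.exp (-((t : ℝ) + ε * d) / 60) *
                Real.exp (ε * d / 4 + ((t:ℝ) + ε * d) / 60) := by
                rw [← Real.exp_add]; congr 1; ring
            _ ≤ Real.exp (-((t : ℝ) + ε * d) / 60) *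
                (5 / 4 : ℝ) ^ (⌊5 / 4 * ε * (d : ℝ)⌋₊ + t) :=
                mul_le_mul_of_nonneg_left key (Real.exp_pos _).le
end

section
/- Define sequences by d₀ = d, Δ₀ = λd (with λ ≥ 1, d > 0), and while Δᵢ > dᵢ + 10⁷, let εᵢ be maximal subject to εᵢ ≤ 1/100 and Δᵢ ≥ (1+10εᵢ)dᵢ, and set d_{i+1} = (1 - (5/4)εᵢ)dᵢ, Δ_{i+1} = (1 - (7/4)εᵢ)Δᵢ. Then for every index j reached before termination, d_j ≥ d/λ³. -/
/-- For the iterative regularisation sequences (`d 0 = d₀`, `Δ 0 = λ·d₀`;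
at each non-terminal step `Δ i > d i + 10⁷` choose `ε i` maximal with `ε i ≤ 1/100`
and `Δ i ≥ (1 + 10 ε i) d i`, and set `d (i+1) = (1 - (5/4) ε i) d i`,
`Δ (i+1) = (1 - (7/4) ε i) Δ i`), every index `j` reached before termination
satisfies `d j ≥ d₀ / λ³`. -/
theorem stmt_9 (d₀ lam : ℝ) (hlam : 1 ≤ lam) (hd₀ : 0 < d₀)
    (d Δ ε : ℕ → ℝ)
    (h0 : d 0 = d₀) (hΔ0 : Δ 0 = lam * d₀)
    (hrec : ∀ i : ℕ, Δ i > d i + 10 ^ 7 →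
      0 < ε i ∧ ε i ≤ 1 / 100 ∧ (1 + 10 * ε i) * d i ≤ Δ i ∧
      (ε i = 1 / 100 ∨ Δ i = (1 + 10 * ε i) * d i) ∧
      d (i + 1) = (1 - 5 / 4 * ε i) * d i ∧
      Δ (i + 1) = (1 - 7 / 4 * ε i) * Δ i) :
    ∀ j : ℕ, (∀ i < j, Δ i > d i + 10 ^ 7) → d₀ / lam ^ 3 ≤ d j := by
  have hlam0 : (0:ℝ) < lam := lt_of_lt_of_le one_pos hlam
  have key : ∀ j, (∀ i < j, Δ i > d i + 10 ^ 7) →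
      0 < d j ∧ d j ≤ Δ j ∧ d₀ * Δ j ^ 3 ≤ lam ^ 3 * d j ^ 4 := by
    intro j
    induction j with
    | zero =>
      intro _
      refine ⟨by rw [h0]; exact hd₀, by rw [h0, hΔ0]; nlinarith, ?_⟩
      rw [h0, hΔ0]; nlinarith [sq_nonneg d₀, pow_pos hd₀ 4, pow_pos hlam0 3]
    | succ n ih =>
      intro h
      obtain ⟨hd, hdΔ, hinv⟩ := ih (fun i hi => h i (Nat.lt_succ_of_lt hi))
      obtain ⟨hε0, hε1, hΔge, -, hd1, hΔ1⟩ := hrec n (h n (Nat.lt_succ_self n))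
      refine ⟨by rw [hd1]; nlinarith, by rw [hd1, hΔ1]; nlinarith, ?_⟩
      rw [hd1, hΔ1]
      have he2 : ε n * ε n ≤ 1/100 * (1/100) := mul_le_mul hε1 hε1 hε0.le (by norm_num)
      have h1 : (1 - 7/4 * ε n)^3 ≤ (1 - 5/4 * ε n)^4 := by
        nlinarith [mul_le_mul_of_nonneg_left he2 hε0.le, sq_nonneg (ε n), pow_pos hε0 4, mul_pos hε0 hε0]
      calc d₀ * ((1 - 7/4 * ε n) * Δ n)^3 = d₀ * Δ n ^ 3 * (1 - 7/4 * ε n)^3 := by ring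
        _ ≤ lam ^ 3 * d n ^ 4 * (1 - 5/4 * ε n)^4 :=
            mul_le_mul hinv h1 (pow_nonneg (by nlinarith) 3) (by positivity)
        _ = lam ^ 3 * ((1 - 5/4 * ε n) * d n)^4 := by ring
  intro j hj
  obtain ⟨hd, hdΔ, hinv⟩ := key j hj
  rw [div_le_iff₀ (by positivity)]
  nlinarith [pow_le_pow_left₀ hd.le hdΔ 3, pow_pos hd 3]
end

section
/- With the sequences dᵢ, Δᵢ, εᵢ defined as in the iterative regularisation (d₀ = d, Δ₀ = λd; εᵢ ≤ 1/100 maximal with Δᵢ ≥ (1+10εᵢ)dᵢ; d_{i+1} = (1-(5/4)εᵢ)dᵢ, Δ_{i+1} = (1-(7/4)εᵢ)Δᵢ; terminating when Δᵢ ≤ dᵢ + 10⁷), for all consecutive non-terminal indices j we have ε_{j+1} d_{j+1} ≤ (99/100) εⱼ dⱼ. In particular the process terminates after finitely many steps provided εⱼ dⱼ ≥ 10⁶ at every non-terminal step. -/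
/-- With the iterative regularisation sequences, for consecutive
non-terminal indices `j`, `j+1` we have `ε (j+1) · d (j+1) ≤ (99/100) · ε j · d j`;
in particular, if `ε j · d j ≥ 10⁶` at every non-terminal step, the process
terminates: there is some `k` with `Δ k ≤ d k + 10⁷`. -/
theorem stmt_10 (d₀ lam : ℝ) (hlam : 1 ≤ lam) (hd₀ : 0 < d₀)
    (d Δ ε : ℕ → ℝ)
    (h0 : d 0 = d₀) (hΔ0 : Δ 0 = lam * d₀)
    (hrec : ∀ i : ℕ, Δ i > d i + 10 ^ 7 →
      0 < ε i ∧ ε i ≤ 1 / 100 ∧ (1 + 10 * ε i) * d i ≤ Δ i ∧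
      (ε i = 1 / 100 ∨ Δ i = (1 + 10 * ε i) * d i) ∧
      d (i + 1) = (1 - 5 / 4 * ε i) * d i ∧
      Δ (i + 1) = (1 - 7 / 4 * ε i) * Δ i) :
    (∀ j : ℕ, (∀ i ≤ j + 1, Δ i > d i + 10 ^ 7) →
      ε (j + 1) * d (j + 1) ≤ 99 / 100 * (ε j * d j)) ∧
    ((∀ j : ℕ, (∀ i ≤ j, Δ i > d i + 10 ^ 7) → 10 ^ 6 ≤ ε j * d j) →
      ∃ k : ℕ, Δ k ≤ d k + 10 ^ 7) := by
  have hdpos : ∀ j : ℕ, (∀ i, i < j → Δ i > d i + 10 ^ 7) → 0 < d j := by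
    intro j
    induction j with
    | zero => intro _; rw [h0]; exact hd₀
    | succ n ih =>
      intro h
      have hn : Δ n > d n + 10 ^ 7 := h n (Nat.lt_succ_self n)
      obtain ⟨hε0, hε1, _, _, hd, _⟩ := hrec n hn
      have hdn : 0 < d n := ih (fun i hi => h i (hi.trans (Nat.lt_succ_self n)))
      rw [hd]
      have hf : (0:ℝ) < 1 - 5/4 * ε n := by nlinarith
      positivity
  have main : ∀ j : ℕ, (∀ i ≤ j + 1, Δ i > d i + 10 ^ 7) →
      ε (j + 1) * d (j + 1) ≤ 99 / 100 * (ε j * d j) := by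
    intro j h
    have hj : Δ j > d j + 10 ^ 7 := h j (by omega)
    have hj1 : Δ (j+1) > d (j+1) + 10 ^ 7 := h (j+1) le_rfl
    obtain ⟨hε0, hε1, hle, hcase, hd, hΔ⟩ := hrec j hj
    obtain ⟨hε0', hε1', hle', -, -, -⟩ := hrec (j+1) hj1
    have hdj : 0 < d j := hdpos j (fun i hi => h i (by omega))
    have hdj1 : 0 < d (j+1) := hdpos (j+1) (fun i hi => h i (by omega))
    rcases hcase with hc | hc
    · rw [hc] at hd ⊢
      nlinarith [mul_nonneg (by linarith : (0:ℝ) ≤ 1/100 - ε (j+1)) hdj1.le]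
    · rw [hc] at hΔ
      nlinarith [hle', hΔ, hd, mul_nonneg (mul_nonneg hε0.le hε0.le) hdj.le]
  refine ⟨main, ?_⟩
  intro hlow
  by_contra hcon
  push_neg at hcon
  have hall : ∀ i, Δ i > d i + 10 ^ 7 := fun i => hcon i
  have hbound : ∀ n : ℕ, ε n * d n ≤ (99/100)^n * (ε 0 * d 0) := by
    intro n
    induction n with
    | zero => simp
    | succ m ih =>
      have hstep := main m (fun i _ => hall i)
      calc ε (m+1) * d (m+1) ≤ 99/100 * (ε m * d m) := hstep
        _ ≤ 99/100 * ((99/100)^m * (ε 0 * d 0)) := by nlinarith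
        _ = (99/100)^(m+1) * (ε 0 * d 0) := by ring
  have hC : 0 < ε 0 * d 0 := by
    obtain ⟨hε0, -, -, -, -, -⟩ := hrec 0 (hall 0)
    exact mul_pos hε0 (by rw [h0]; exact hd₀)
  obtain ⟨n, hn⟩ := exists_pow_lt_of_lt_one
    (show (0:ℝ) < 10^6 / (ε 0 * d 0) by positivity)
    (show (99:ℝ)/100 < 1 by norm_num)
  have h1 := hlow n (fun i _ => hall i)
  have h2 := hbound n
  have h3 : (99/100:ℝ)^n * (ε 0 * d 0) < 10^6 := (lt_div_iff₀ hC).mp hn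
  linarith
end
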